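/- Let ν be a nonzero finite Borel measure on ℝ and let a < b be real numbers with (a, b) ∩ supp ν = ∅ and ∫_ℝ (x − a)⁻² dν(x) = +∞ and ∫_ℝ (x − b)⁻² dν(x) = +∞ (as integrals with values in [0, +∞]). Then there exists a unique ω₀ ∈ (a, b) with ∫_ℝ (x − ω₀)⁻³ dν(x) = 0, and ω₀ is the unique minimizer on (a, b) of the function ω ↦ ∫_ℝ (x − ω)⁻² dν(x). -/

import Mathlib

open MeasureTheory Complex Set Filter Topology

noncomputable section

/-- Cauchy–Stieltjes transform `m_μ(z) = ∫ (x − z)⁻¹ dμ(x)`. -/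
def mTr (μ : Measure ℝ) (z : ℂ) : ℂ := ∫ x, ((x : ℂ) - z)⁻¹ ∂μ

/-- Negative reciprocal Cauchy–Stieltjes transform `F_μ(z) = −1/m_μ(z)`. -/
def FTr (μ : Measure ℝ) (z : ℂ) : ℂ := -(mTr μ z)⁻¹

/-- `I_ν(ω) = ∫ |x − ω|⁻² dν(x)`. -/
def Inu (ν : Measure ℝ) (ω : ℂ) : ℝ := ∫ x, (Complex.normSq ((x : ℂ) - ω))⁻¹ ∂ν

/-- Topological support of a Borel measure on ℝ. -/
def msupport (μ : Measure ℝ) : Set ℝ := {x | ∀ U : Set ℝ, IsOpen U → x ∈ U → 0 < μ U}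

/-- `μh` is a Nevanlinna measure for the (centered) measure `μ`:
a finite Borel measure with `F_μ(ω) − ω = ∫ (x − ω)⁻¹ dμh(x)` on ℂ⁺. -/
def IsNevanlinna (μ μh : Measure ℝ) : Prop :=
  IsFiniteMeasure μh ∧ ∀ ω : ℂ, 0 < ω.im → FTr μ ω - ω = ∫ x, ((x : ℂ) - ω)⁻¹ ∂μh

/-- Subordination function for `μ` at time `t`. -/
structure IsSubordination (μ : Measure ℝ) (t : ℝ) (ω : ℂ → ℂ) : Prop where
  contOn : ContinuousOn ω {z : ℂ | 0 ≤ z.im}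
  mapsTo : ∀ z : ℂ, 0 ≤ z.im → 0 ≤ (ω z).im
  diff : DifferentiableOn ℂ ω {z : ℂ | 0 < z.im}
  im_ge : ∀ z : ℂ, 0 < z.im → z.im ≤ (ω z).im
  subord : ∀ z : ℂ, 0 < z.im → (t : ℂ) * ω z - z = ((t - 1 : ℝ) : ℂ) * FTr μ (ω z)

/-- `ν = μ^{⊞t}`, the free convolution power associated with the subordination function `ω`. -/
def IsFreePower (μ : Measure ℝ) (t : ℝ) (ω : ℂ → ℂ) (ν : Measure ℝ) : Prop :=
  IsProbabilityMeasure ν ∧ ∀ z : ℂ, 0 < z.im → mTr ν z = mTr μ (ω z)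

/-- Subordination functions for the pair `(μa, μb)`. -/
structure IsPairSubordination (μa μb : Measure ℝ) (ωa ωb : ℂ → ℂ) : Prop where
  diff_a : DifferentiableOn ℂ ωa {z : ℂ | 0 < z.im}
  diff_b : DifferentiableOn ℂ ωb {z : ℂ | 0 < z.im}
  im_a : ∀ z : ℂ, 0 < z.im → z.im ≤ (ωa z).im
  im_b : ∀ z : ℂ, 0 < z.im → z.im ≤ (ωb z).im
  lim_a : Tendsto (fun η : ℝ => ωa (η * Complex.I) / (η * Complex.I)) atTop (nhds 1)
  lim_b : Tendsto (fun η : ℝ => ωb (η * Complex.I) / (η * Complex.I)) atTop (nhds 1)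
  eq_a : ∀ z : ℂ, 0 < z.im → ωa z + ωb z - z = FTr μa (ωb z)
  eq_b : ∀ z : ℂ, 0 < z.im → ωa z + ωb z - z = FTr μb (ωa z)

/-- `ν = μa ⊞ μb`, the free additive convolution. -/
def IsFreeConv (μa μb : Measure ℝ) (ωb : ℂ → ℂ) (ν : Measure ℝ) : Prop :=
  IsProbabilityMeasure ν ∧ ∀ z : ℂ, 0 < z.im → mTr ν z = mTr μa (ωb z)

/-- Assumption 1 of the paper: `μ` is a centered, compactly supported probability
measure whose singular part consists of finitely many atoms and whose absolutely
continuous part has a density `ρ` of Jacobi type, supported on finitely many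
disjoint compact intervals with power-law behavior (exponents in `(−1,1)`). -/
structure JacobiData (μ : Measure ℝ) where
  ρ : ℝ → ℝ
  n : ℕ
  npos : 0 < n
  Em : Fin n → ℝ
  Ep : Fin n → ℝ
  βm : Fin n → ℝ
  βp : Fin n → ℝ
  Cj : Fin n → ℝ
  atoms : Finset ℝ
  w : ℝ → ℝ
  prob : IsProbabilityMeasure μ
  compactSupp : ∃ K : Set ℝ, IsCompact K ∧ μ Kᶜ = 0
  centered : ∫ x, x ∂μ = 0
  lt : ∀ j, Em j < Ep j
  disj : ∀ i j, i ≠ j → Disjoint (Set.Icc (Em i) (Ep i)) (Set.Icc (Em j) (Ep j))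
  βm_mem : ∀ j, βm j ∈ Set.Ioo (-1 : ℝ) 1
  βp_mem : ∀ j, βp j ∈ Set.Ioo (-1 : ℝ) 1
  Cj_ge : ∀ j, 1 ≤ Cj j
  ρ_nonneg : ∀ x, 0 ≤ ρ x
  ρ_supp : ∀ x, x ∉ ⋃ j, Set.Icc (Em j) (Ep j) → ρ x = 0
  powerLaw : ∀ j, ∀ᵐ E ∂(volume.restrict (Set.Icc (Em j) (Ep j))),
      (Cj j)⁻¹ * ((E - Em j) ^ (βm j) * (Ep j - E) ^ (βp j)) ≤ ρ E ∧
      ρ E ≤ Cj j * ((E - Em j) ^ (βm j) * (Ep j - E) ^ (βp j))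
  w_nonneg : ∀ a, 0 ≤ w a
  decomp : μ = volume.withDensity (fun x => ENNReal.ofReal (ρ x))
      + ∑ a ∈ atoms, ENNReal.ofReal (w a) • Measure.dirac a

/-- The support of the absolutely continuous part of `μ`. -/
def JacobiData.acSupport {μ : Measure ℝ} (d : JacobiData μ) : Set ℝ :=
  ⋃ j, Set.Icc (d.Em j) (d.Ep j)

/-- The Hölder condition (5.1)/(2.8) of the paper on the density of `μ_ac`. -/
def JacobiData.HolderCond {μ : Measure ℝ} (d : JacobiData μ) : Prop :=
  ∀ j, ∃ L γ : NNReal, 0 < γ ∧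
    HolderOnWith L γ
      (fun E => d.ρ E / ((E - d.Em j) ^ (d.βm j) * (d.Ep j - E) ^ (d.βp j)))
      (Set.Icc (d.Em j) (d.Ep j))

/-- Assumption 2 of the paper: a centered, absolutely continuous probability measure
supported on finitely many disjoint compact intervals, with density of Jacobi type. -/
structure AbsJacobiData (μ : Measure ℝ) where
  ρ : ℝ → ℝ
  n : ℕ
  npos : 0 < n
  Am : Fin n → ℝ
  Ap : Fin n → ℝ
  sm : Fin n → ℝ
  sp : Fin n → ℝ
  Cj : Fin n → ℝ
  prob : IsProbabilityMeasure μ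
  centered : ∫ x, x ∂μ = 0
  lt : ∀ j, Am j < Ap j
  disj : ∀ i j, i ≠ j → Disjoint (Set.Icc (Am i) (Ap i)) (Set.Icc (Am j) (Ap j))
  sm_mem : ∀ j, sm j ∈ Set.Ioo (-1 : ℝ) 1
  sp_mem : ∀ j, sp j ∈ Set.Ioo (-1 : ℝ) 1
  Cj_ge : ∀ j, 1 ≤ Cj j
  ρ_nonneg : ∀ x, 0 ≤ ρ x
  ρ_supp : ∀ x, x ∉ ⋃ j, Set.Icc (Am j) (Ap j) → ρ x = 0
  powerLaw : ∀ j, ∀ᵐ E ∂(volume.restrict (Set.Icc (Am j) (Ap j))),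
      (Cj j)⁻¹ * ((E - Am j) ^ (sm j) * (Ap j - E) ^ (sp j)) ≤ ρ E ∧
      ρ E ≤ Cj j * ((E - Am j) ^ (sm j) * (Ap j - E) ^ (sp j))
  decomp : μ = volume.withDensity (fun x => ENNReal.ofReal (ρ x))


open scoped ENNReal NNReal

private lemma meas_inv_pow (ω : ℝ) (k : ℕ) : Measurable (fun x : ℝ => ((x - ω) ^ k)⁻¹) :=
  ((measurable_id.sub_const ω).pow_const k).inv

private lemma abs_ge_of_gap {a b ω x : ℝ} (hω : ω ∈ Set.Ioo a b) (hx : x ≤ a ∨ b ≤ x) :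
    min (ω - a) (b - ω) ≤ |x - ω| := by
  rcases hx with h | h
  · rw [_root_.abs_of_nonpos (by linarith [hω.1])]
    exact le_trans (min_le_left _ _) (by linarith)
  · rw [_root_.abs_of_nonneg (by linarith [hω.2])]
    exact le_trans (min_le_right _ _) (by linarith)

private lemma integrable_inv_pow (ν : Measure ℝ) [IsFiniteMeasure ν] {a b ω : ℝ}
    (hae : ∀ᵐ x ∂ν, x ≤ a ∨ b ≤ x) (hω : ω ∈ Set.Ioo a b) (k : ℕ) :
    Integrable (fun x : ℝ => ((x - ω) ^ k)⁻¹) ν := by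
  have hc0 : 0 < min (ω - a) (b - ω) := lt_min (by linarith [hω.1]) (by linarith [hω.2])
  refine (integrable_const ((min (ω - a) (b - ω) ^ k)⁻¹)).mono'
    (meas_inv_pow ω k).aestronglyMeasurable ?_
  filter_upwards [hae] with x hx
  have hcx := abs_ge_of_gap hω hx
  rw [Real.norm_eq_abs, _root_.abs_inv, _root_.abs_pow]
  exact inv_anti₀ (pow_pos hc0 k) (pow_le_pow_left₀ hc0.le hcx k)

private lemma integral_pos_of_ae_pos {ν : Measure ℝ} (hν : ν ≠ 0) {f : ℝ → ℝ}
    (hf : Integrable f ν) (hpos : ∀ᵐ x ∂ν, 0 < f x) : 0 < ∫ x, f x ∂ν := by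
  rw [integral_pos_iff_support_of_nonneg_ae (hpos.mono fun x h => h.le) hf]
  have hcompl : ν (Function.support f)ᶜ = 0 := by
    refine measure_mono_null ?_ (ae_iff.mp hpos)
    intro x hx
    simp only [Set.mem_compl_iff, Function.mem_support, not_not] at hx
    simp [hx]
  rw [pos_iff_ne_zero]
  intro h0
  have h1 := measure_union_le (μ := ν) (Function.support f) (Function.support f)ᶜ
  rw [Set.union_compl_self, h0, hcompl] at h1
  exact hν (Measure.measure_univ_eq_zero.mp (le_antisymm (by simpa using h1) zero_le))

private lemma cube_inv_lt {u v : ℝ} (huv : 0 < u * v) (h : v < u) : (u ^ 3)⁻¹ < (v ^ 3)⁻¹ := by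
  have hu : u ≠ 0 := fun h0 => by simp [h0] at huv
  have hv : v ≠ 0 := fun h0 => by simp [h0] at huv
  rw [← sub_pos]
  have key : (v ^ 3)⁻¹ - (u ^ 3)⁻¹ = (u ^ 3 - v ^ 3) / (u ^ 3 * v ^ 3) := by
    rw [inv_sub_inv (pow_ne_zero 3 hv) (pow_ne_zero 3 hu), mul_comm]
  rw [key]
  apply div_pos
  · nlinarith [mul_pos (sub_pos.mpr h) huv, sq_nonneg (u - v), sq_nonneg (u + v)]
  · nlinarith [pow_pos huv 3]

private lemma strict_convex_pt {u v : ℝ} (huv : 0 < u * v) (hne : v ≠ u) :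
    0 < (v ^ 2)⁻¹ - (u ^ 2)⁻¹ - 2 * (u - v) * (u ^ 3)⁻¹ := by
  have hu : u ≠ 0 := fun h0 => by simp [h0] at huv
  have hv : v ≠ 0 := fun h0 => by simp [h0] at huv
  have hsub : u - v ≠ 0 := sub_ne_zero.mpr (Ne.symm hne)
  have hsq : 0 < (u - v) ^ 2 := pow_two_pos_of_ne_zero hsub
  have hv2 : 0 < v ^ 2 := pow_two_pos_of_ne_zero hv
  have hu2 : 0 < u ^ 2 := pow_two_pos_of_ne_zero hu
  have key : (v ^ 2)⁻¹ - (u ^ 2)⁻¹ - 2 * (u - v) * (u ^ 3)⁻¹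
      = ((u - v) ^ 2 * (u + 2 * v)) / (u ^ 3 * v ^ 2) := by
    field_simp; ring
  rw [key]
  rcases lt_or_gt_of_ne hu with hneg | hpos
  · have hvneg : v < 0 := by nlinarith
    apply div_pos_of_neg_of_neg
    · exact mul_neg_of_pos_of_neg hsq (by linarith)
    · have hu3 : u ^ 3 < 0 := by nlinarith
      exact mul_neg_of_neg_of_pos hu3 hv2
  · have hvpos : 0 < v := by nlinarith
    apply div_pos
    · exact mul_pos hsq (by linarith)
    · exact mul_pos (pow_pos hpos 3) hv2

private lemma h_contAt (ν : Measure ℝ) [IsFiniteMeasure ν] {a b : ℝ}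
    (hae : ∀ᵐ x ∂ν, x ≤ a ∨ b ≤ x) {ω : ℝ} (hω : ω ∈ Set.Ioo a b) :
    ContinuousAt (fun t => ∫ x, ((x - t) ^ 3)⁻¹ ∂ν) ω := by
  set r := min (ω - a) (b - ω) / 2 with hr
  have hω1 := hω.1
  have hω2 := hω.2
  have hmin2 : 2 * r = min (ω - a) (b - ω) := by rw [hr]; ring
  have hr0 : 0 < r := by
    rw [hr]
    exact div_pos (lt_min (by linarith) (by linarith)) two_pos
  apply continuousAt_of_dominated (bound := fun _ => (r ^ 3)⁻¹)
  · exact Eventually.of_forall fun t => (meas_inv_pow t 3).aestronglyMeasurable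
  · filter_upwards [Metric.closedBall_mem_nhds ω hr0] with t ht
    filter_upwards [hae] with x hx
    rw [Metric.mem_closedBall, Real.dist_eq] at ht
    obtain ⟨ht1, ht2⟩ := abs_le.mp ht
    have hma := min_le_left (ω - a) (b - ω)
    have hmb := min_le_right (ω - a) (b - ω)
    have htIoo : t ∈ Set.Ioo a b := ⟨by linarith, by linarith⟩
    have hmint : r ≤ min (t - a) (b - t) := le_min (by linarith) (by linarith)
    have habs : r ≤ |x - t| := hmint.trans (abs_ge_of_gap htIoo hx)
    rw [Real.norm_eq_abs, _root_.abs_inv, _root_.abs_pow]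
    exact inv_anti₀ (pow_pos hr0 3) (pow_le_pow_left₀ hr0.le habs 3)
  · exact integrable_const _
  · filter_upwards [hae] with x hx
    have hxω : x - ω ≠ 0 := by
      rcases hx with h | h
      · intro h0; have : x = ω := by linarith
        rw [this] at h; linarith
      · intro h0; have : x = ω := by linarith
        rw [this] at h; linarith
    exact ((continuousAt_const.sub continuousAt_id).pow 3).inv₀ (pow_ne_zero _ hxω)

private lemma exists_neg (ν : Measure ℝ) [IsFiniteMeasure ν] {a b m : ℝ}
    (ham : a < m) (hmb : m < b)
    (hae : ∀ᵐ x ∂ν, x ≤ a ∨ b ≤ x)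
    (ha : ∫⁻ x, ENNReal.ofReal (((x - a) ^ 2)⁻¹) ∂ν = ⊤) :
    ∃ ω ∈ Set.Ioo a m, ∫ x, ((x - ω) ^ 3)⁻¹ ∂ν < 0 := by
  have hab : a < b := ham.trans hmb
  -- lintegral over Iic a is ⊤
  have hIic : ∫⁻ x in Iic a, ENNReal.ofReal (((x - a) ^ 2)⁻¹) ∂ν = ⊤ := by
    have hsplit := lintegral_add_compl (fun x => ENNReal.ofReal (((x - a) ^ 2)⁻¹))
      (measurableSet_Iic (a := a)) (μ := ν)
    have hcompl : ∫⁻ x in (Iic a)ᶜ, ENNReal.ofReal (((x - a) ^ 2)⁻¹) ∂ν ≠ ⊤ := by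
      have hble : ∫⁻ x in (Iic a)ᶜ, ENNReal.ofReal (((x - a) ^ 2)⁻¹) ∂ν
          ≤ ENNReal.ofReal (((b - a) ^ 2)⁻¹) * ν ((Iic a)ᶜ) := by
        rw [← setLIntegral_const]
        refine lintegral_mono_ae ?_
        filter_upwards [ae_restrict_of_ae hae,
          ae_restrict_mem (measurableSet_Iic (a := a)).compl] with x hx hx2
        rcases hx with h | h
        · exact absurd h (by simpa using hx2)
        · apply ENNReal.ofReal_le_ofReal
          apply inv_anti₀ (pow_pos (by linarith : (0:ℝ) < b - a) 2)
          nlinarith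
      exact (hble.trans_lt (ENNReal.mul_lt_top ENNReal.ofReal_lt_top (measure_lt_top ν _))).ne
    by_contra hne
    exact (ENNReal.add_ne_top.mpr ⟨hne, hcompl⟩) (hsplit.trans ha)
  -- lintegral over Icc (a-1) a is ⊤
  have hIcc : ∫⁻ x in Icc (a - 1) a, ENNReal.ofReal (((x - a) ^ 2)⁻¹) ∂ν = ⊤ := by
    have hunion : Iio (a - 1) ∪ Icc (a - 1) a = Iic a := Iio_union_Icc_eq_Iic (by linarith)
    have hdis : Disjoint (Iio (a - 1)) (Icc (a - 1) a) :=
      Set.disjoint_left.mpr fun x hx hx2 => absurd hx2.1 (not_le.mpr hx)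
    have hun := lintegral_union (measurableSet_Icc) hdis
      (μ := ν) (f := fun x => ENNReal.ofReal (((x - a) ^ 2)⁻¹))
    rw [hunion] at hun
    rw [hun] at hIic
    have hA : ∫⁻ x in Iio (a - 1), ENNReal.ofReal (((x - a) ^ 2)⁻¹) ∂ν ≠ ⊤ := by
      have hle : ∫⁻ x in Iio (a - 1), ENNReal.ofReal (((x - a) ^ 2)⁻¹) ∂ν
          ≤ 1 * ν (Iio (a - 1)) := by
        rw [← setLIntegral_const]
        refine lintegral_mono_ae ?_
        filter_upwards [ae_restrict_mem measurableSet_Iio] with x hx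
        rw [show (1 : ℝ≥0∞) = ENNReal.ofReal 1 by simp]
        apply ENNReal.ofReal_le_ofReal
        rw [mem_Iio] at hx
        have h1 : (1 : ℝ) ≤ (x - a) ^ 2 := by nlinarith
        rw [show (1:ℝ) = (1:ℝ)⁻¹ by norm_num]
        exact inv_anti₀ (by norm_num) h1
      exact (hle.trans_lt (by simpa using measure_lt_top ν (Iio (a - 1)))).ne
    by_contra hB
    exact (ENNReal.add_ne_top.mpr ⟨hA, hB⟩) hIic
  -- lintegral of cube inverse over Iic a is ⊤
  have hS : ∫⁻ x in Iic a, ENNReal.ofReal (((a - x) ^ 3)⁻¹) ∂ν = ⊤ := by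
    rw [eq_top_iff, ← hIcc]
    calc ∫⁻ x in Icc (a - 1) a, ENNReal.ofReal (((x - a) ^ 2)⁻¹) ∂ν
        ≤ ∫⁻ x in Icc (a - 1) a, ENNReal.ofReal (((a - x) ^ 3)⁻¹) ∂ν := by
          refine lintegral_mono_ae ?_
          filter_upwards [ae_restrict_mem measurableSet_Icc] with x hx
          apply ENNReal.ofReal_le_ofReal
          rcases eq_or_lt_of_le hx.2 with heq | hlt
          · rw [heq]; simp
          · have h1 : 0 < a - x := by linarith
            have h2 : a - x ≤ 1 := by linarith [hx.1]
            rw [show (x - a) ^ 2 = (a - x) ^ 2 by ring]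
            apply inv_anti₀ (pow_pos h1 3)
            nlinarith
      _ ≤ ∫⁻ x in Iic a, ENNReal.ofReal (((a - x) ^ 3)⁻¹) ∂ν :=
          lintegral_mono_set (fun x hx => hx.2)
  -- the sequence tending to a from the right
  set w : ℕ → ℝ := fun n => a + (m - a) / (n + 2) with hw
  have hwmem : ∀ n, w n ∈ Set.Ioo a m := by
    intro n
    have hn2 : (1 : ℝ) < (n : ℝ) + 2 := by
      have := Nat.cast_nonneg (α := ℝ) n; linarith
    constructor
    · have : 0 < (m - a) / ((n : ℝ) + 2) := div_pos (by linarith) (by positivity)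
      simp only [hw]; linarith
    · have h1 : (m - a) / ((n : ℝ) + 2) < m - a := div_lt_self (by linarith) hn2
      simp only [hw]; linarith
  have hwt : Tendsto w atTop (𝓝 a) := by
    have h0 : Tendsto (fun n : ℕ => (m - a) / ((n : ℝ) + 2)) atTop (𝓝 0) :=
      Tendsto.div_atTop tendsto_const_nhds
        (tendsto_atTop_add_const_right _ _ tendsto_natCast_atTop_atTop)
    have := tendsto_const_nhds (x := a) (f := atTop (α := ℕ)) |>.add h0
    simpa using this
  set L : ℕ → ℝ≥0∞ := fun n => ∫⁻ x in Iic a, ENNReal.ofReal (((w n - x) ^ 3)⁻¹) ∂ν with hL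
  have hLliminf : liminf L atTop = ⊤ := by
    refine top_le_iff.mp ?_
    calc (⊤ : ℝ≥0∞) = ∫⁻ x in Iic a, ENNReal.ofReal (((a - x) ^ 3)⁻¹) ∂ν := hS.symm
      _ ≤ ∫⁻ x in Iic a, liminf (fun n => ENNReal.ofReal (((w n - x) ^ 3)⁻¹)) atTop ∂ν := by
          refine lintegral_mono_ae ?_
          filter_upwards [ae_restrict_mem measurableSet_Iic] with x hx
          rcases eq_or_lt_of_le (mem_Iic.mp hx) with heq | hlt
          · rw [heq]; simp
          · have hax : a - x ≠ 0 := sub_ne_zero.mpr hlt.ne'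
            have hca : ContinuousAt (fun t : ℝ => ((t - x) ^ 3)⁻¹) a :=
              ((continuousAt_id.sub continuousAt_const).pow 3).inv₀
                (by simpa using pow_ne_zero 3 hax)
            have hreal : Tendsto (fun n => ((w n - x) ^ 3)⁻¹) atTop (𝓝 (((a - x) ^ 3)⁻¹)) :=
              hca.tendsto.comp hwt
            have hc : Tendsto (fun n => ENNReal.ofReal (((w n - x) ^ 3)⁻¹)) atTop
                (𝓝 (ENNReal.ofReal (((a - x) ^ 3)⁻¹))) :=
              (ENNReal.continuous_ofReal.tendsto _).comp hreal
            exact le_of_eq hc.liminf_eq.symm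
      _ ≤ liminf L atTop := by
          apply lintegral_liminf_le
          intro n
          exact ENNReal.measurable_ofReal.comp
            (((measurable_const.sub measurable_id).pow_const 3).inv)
  -- pick n with L n large
  set C : ℝ := ((b - m) ^ 3)⁻¹ * (ν Set.univ).toReal with hC
  have hbm : (0 : ℝ) < b - m := by linarith
  have hC0 : 0 ≤ C := mul_nonneg (inv_nonneg.mpr (pow_pos hbm 3).le) ENNReal.toReal_nonneg
  have hev : ∀ᶠ n in atTop, ENNReal.ofReal (C + 1) < L n :=
    eventually_lt_of_lt_liminf (by rw [hLliminf]; exact ENNReal.ofReal_lt_top)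
  obtain ⟨n, hn⟩ := hev.exists
  refine ⟨w n, hwmem n, ?_⟩
  have hwb : w n ∈ Set.Ioo a b := ⟨(hwmem n).1, (hwmem n).2.trans hmb⟩
  have hint : Integrable (fun x => ((x - w n) ^ 3)⁻¹) ν := integrable_inv_pow ν hae hwb 3
  have hfg : ∀ x : ℝ, ((x - w n) ^ 3)⁻¹ = -(((w n - x) ^ 3)⁻¹) := fun x => by
    rw [show (x - w n) ^ 3 = -((w n - x) ^ 3) by ring, inv_neg]
  have hg : Integrable (fun x => ((w n - x) ^ 3)⁻¹) (ν.restrict (Iic a)) := by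
    have h1 := (hint.restrict (s := Iic a)).neg
    refine h1.congr (Eventually.of_forall fun x => ?_)
    simp only [Pi.neg_apply]
    rw [hfg x, neg_neg]
  have hIicval : ∫ x in Iic a, ((x - w n) ^ 3)⁻¹ ∂ν = -(L n).toReal := by
    have hposg : 0 ≤ᵐ[ν.restrict (Iic a)] fun x => ((w n - x) ^ 3)⁻¹ := by
      filter_upwards [ae_restrict_mem measurableSet_Iic] with x hx
      have h1 : 0 < w n - x := by
        have := (hwmem n).1; have hx' := mem_Iic.mp hx; linarith
      positivity
    have heq := integral_eq_lintegral_of_nonneg_ae hposg hg.aestronglyMeasurable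
    calc ∫ x in Iic a, ((x - w n) ^ 3)⁻¹ ∂ν
        = ∫ x in Iic a, -(((w n - x) ^ 3)⁻¹) ∂ν := by simp_rw [hfg]
      _ = -∫ x in Iic a, ((w n - x) ^ 3)⁻¹ ∂ν := integral_neg _
      _ = -(L n).toReal := by rw [heq]
  have hLne : L n ≠ ⊤ := hg.lintegral_lt_top.ne
  have hCL : C + 1 ≤ (L n).toReal := (ENNReal.ofReal_le_iff_le_toReal hLne).mp hn.le
  have hcompl : ∫ x in (Iic a)ᶜ, ((x - w n) ^ 3)⁻¹ ∂ν ≤ C := by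
    have hb2 : ∀ᵐ x ∂ν.restrict (Iic a)ᶜ, ((x - w n) ^ 3)⁻¹ ≤ ((b - m) ^ 3)⁻¹ := by
      filter_upwards [ae_restrict_of_ae hae,
        ae_restrict_mem (measurableSet_Iic (a := a)).compl] with x hx hx2
      rcases hx with h | h
      · exact absurd h (by simpa using hx2)
      · have h2 : b - m ≤ x - w n := by have := (hwmem n).2; linarith
        apply inv_anti₀ (pow_pos hbm 3)
        exact pow_le_pow_left₀ hbm.le h2 3
    calc ∫ x in (Iic a)ᶜ, ((x - w n) ^ 3)⁻¹ ∂ν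
        ≤ ∫ _x in (Iic a)ᶜ, ((b - m) ^ 3)⁻¹ ∂ν :=
          integral_mono_ae hint.restrict (integrable_const _) hb2
      _ = (ν (Iic a)ᶜ).toReal * ((b - m) ^ 3)⁻¹ := by
          rw [integral_const, smul_eq_mul, Measure.real, Measure.restrict_apply_univ]
      _ ≤ C := by
          rw [hC, mul_comm]
          exact mul_le_mul_of_nonneg_left
            (ENNReal.toReal_mono (measure_ne_top ν _) (measure_mono (subset_univ _)))
            (inv_nonneg.mpr (pow_pos hbm 3).le)
  have hsplit := integral_add_compl (measurableSet_Iic (a := a)) hint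
  rw [← hsplit, hIicval]
  linarith

/-- on a gap `(a,b)` of `supp ν` at whose endpoints `∫ (x−·)⁻² dν` blows up,
there is a unique `ω₀ ∈ (a,b)` with `∫ (x−ω₀)⁻³ dν = 0`, and it is the unique minimizer
of `ω ↦ ∫ (x−ω)⁻² dν` on `(a,b)`. -/
theorem statement8 (ν : Measure ℝ) (hfin : IsFiniteMeasure ν) (hν : ν ≠ 0)
    (a b : ℝ) (hab : a < b) (hdisj : Set.Ioo a b ∩ msupport ν = ∅)
    (ha : ∫⁻ x, ENNReal.ofReal (((x - a) ^ 2)⁻¹) ∂ν = ⊤)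
    (hb : ∫⁻ x, ENNReal.ofReal (((x - b) ^ 2)⁻¹) ∂ν = ⊤) :
    ∃ ω0 ∈ Set.Ioo a b,
      (∫ x, ((x - ω0) ^ 3)⁻¹ ∂ν = 0) ∧
      (∀ ω ∈ Set.Ioo a b, (∫ x, ((x - ω) ^ 3)⁻¹ ∂ν = 0) → ω = ω0) ∧
      (∀ ω ∈ Set.Ioo a b, ω ≠ ω0 →
        ∫ x, ((x - ω0) ^ 2)⁻¹ ∂ν < ∫ x, ((x - ω) ^ 2)⁻¹ ∂ν) := by
  haveI := hfin
  -- the gap is ν-null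
  have hgapnull : ν (Set.Ioo a b) = 0 := by
    apply measure_null_of_locally_null
    intro x hx
    have hxn : x ∉ msupport ν := fun hmem =>
      (Set.eq_empty_iff_forall_notMem.mp hdisj x) ⟨hx, hmem⟩
    simp only [msupport, Set.mem_setOf_eq, not_forall] at hxn
    obtain ⟨U, hU, hxU, hνU⟩ := hxn
    exact ⟨U, nhdsWithin_le_nhds (hU.mem_nhds hxU), le_zero_iff.mp (not_lt.mp hνU)⟩
  have hae : ∀ᵐ x ∂ν, x ≤ a ∨ b ≤ x := by
    rw [ae_iff]
    apply measure_mono_null ?_ hgapnull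
    intro x hx
    simp only [Set.mem_setOf_eq, not_or, not_le] at hx
    exact hx
  set m : ℝ := (a + b) / 2 with hm
  have ham : a < m := by rw [hm]; linarith
  have hmb : m < b := by rw [hm]; linarith
  -- negative value near a
  obtain ⟨ω₁, hω₁, hneg⟩ := exists_neg ν ham hmb hae ha
  -- positive value near b, by reflection
  obtain ⟨ω₂, hω₂, hpos⟩ : ∃ ω ∈ Set.Ioo m b, 0 < ∫ x, ((x - ω) ^ 3)⁻¹ ∂ν := by
    set ν' := Measure.map Neg.neg ν with hν'
    haveI hfin' : IsFiniteMeasure ν' := by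
      constructor
      rw [hν', Measure.map_apply measurable_neg MeasurableSet.univ]
      exact measure_lt_top ν _
    have hae' : ∀ᵐ x ∂ν', x ≤ -b ∨ -a ≤ x := by
      rw [hν', ae_map_iff measurable_neg.aemeasurable
        (show MeasurableSet {x : ℝ | x ≤ -b ∨ -a ≤ x} from
          (measurableSet_Iic (a := -b)).union (measurableSet_Ici (a := -a)))]
      filter_upwards [hae] with x hx
      show -x ≤ -b ∨ -a ≤ -x
      rcases hx with h | h
      · right; linarith
      · left; linarith
    have hb' : ∫⁻ x, ENNReal.ofReal (((x - (-b)) ^ 2)⁻¹) ∂ν' = ⊤ := by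
      rw [hν', lintegral_map (show Measurable fun x : ℝ => ENNReal.ofReal (((x - -b) ^ 2)⁻¹)
        from ENNReal.measurable_ofReal.comp (meas_inv_pow (-b) 2)) measurable_neg]
      have heq : ∀ x : ℝ, ((Neg.neg x - (-b)) ^ 2)⁻¹ = ((x - b) ^ 2)⁻¹ := fun x => by
        rw [show (Neg.neg x - (-b)) ^ 2 = (x - b) ^ 2 by ring]
      simp_rw [heq]
      exact hb
    obtain ⟨ω', hω', hneg'⟩ := exists_neg ν' (show -b < -m by linarith)
      (show -m < -a by linarith) hae' hb'
    refine ⟨-ω', ⟨by linarith [hω'.2], by linarith [hω'.1]⟩, ?_⟩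
    have hmap : ∫ x, ((x - ω') ^ 3)⁻¹ ∂ν' = ∫ x, ((Neg.neg x - ω') ^ 3)⁻¹ ∂ν := by
      rw [hν', integral_map measurable_neg.aemeasurable
        (meas_inv_pow ω' 3).aestronglyMeasurable]
    rw [hmap] at hneg'
    have heq2 : ∀ x : ℝ, ((Neg.neg x - ω') ^ 3)⁻¹ = -(((x - (-ω')) ^ 3)⁻¹) := fun x => by
      rw [show (Neg.neg x - ω') ^ 3 = -((x - (-ω')) ^ 3) by ring, inv_neg]
    rw [show (fun x : ℝ => ((Neg.neg x - ω') ^ 3)⁻¹)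
        = fun x : ℝ => -(((x - (-ω')) ^ 3)⁻¹) from funext heq2, integral_neg] at hneg'
    linarith
  have h1b : ω₁ ∈ Set.Ioo a b := ⟨hω₁.1, hω₁.2.trans hmb⟩
  have h2b : ω₂ ∈ Set.Ioo a b := ⟨ham.trans hω₂.1, hω₂.2⟩
  have hω12 : ω₁ < ω₂ := hω₁.2.trans hω₂.1
  -- IVT
  have hcont : ContinuousOn (fun t => ∫ x, ((x - t) ^ 3)⁻¹ ∂ν) (Set.Icc ω₁ ω₂) := fun t ht =>
    (h_contAt ν hae ⟨lt_of_lt_of_le h1b.1 ht.1, lt_of_le_of_lt ht.2 h2b.2⟩).continuousWithinAt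
  obtain ⟨ω₀, hω₀mem, hh0⟩ := intermediate_value_Icc hω12.le hcont ⟨hneg.le, hpos.le⟩
  have hω₀ : ω₀ ∈ Set.Ioo a b := ⟨lt_of_lt_of_le h1b.1 hω₀mem.1, lt_of_le_of_lt hω₀mem.2 h2b.2⟩
  have hz0 : ∫ x, ((x - ω₀) ^ 3)⁻¹ ∂ν = 0 := hh0
  -- strict monotonicity
  have hmono : ∀ s t : ℝ, s ∈ Set.Ioo a b → t ∈ Set.Ioo a b → s < t →
      ∫ x, ((x - s) ^ 3)⁻¹ ∂ν < ∫ x, ((x - t) ^ 3)⁻¹ ∂ν := by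
    intro s t hs ht hst
    have his := integrable_inv_pow ν hae hs 3
    have hit := integrable_inv_pow ν hae ht 3
    have hiD : Integrable (fun x => ((x - t) ^ 3)⁻¹ - ((x - s) ^ 3)⁻¹) ν := hit.sub his
    rw [← sub_pos, ← integral_sub hit his]
    apply integral_pos_of_ae_pos hν hiD
    filter_upwards [hae] with x hx
    have hkey := cube_inv_lt (u := x - s) (v := x - t) ?_ (by linarith)
    · linarith
    · rcases hx with h | h
      · have := hs.1; have := ht.1
        have h1 : x - s < 0 := by linarith
        have h2 : x - t < 0 := by linarith
        exact mul_pos_of_neg_of_neg h1 h2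
      · have := hs.2; have := ht.2
        exact mul_pos (by linarith) (by linarith)
  refine ⟨ω₀, hω₀, hz0, ?_, ?_⟩
  · intro ω hω hz
    by_contra hne
    rcases lt_or_gt_of_ne hne with h | h
    · have := hmono ω ω₀ hω hω₀ h
      rw [hz, hz0] at this; exact lt_irrefl 0 this
    · have := hmono ω₀ ω hω₀ hω h
      rw [hz, hz0] at this; exact lt_irrefl 0 this
  · intro ω hω hne
    have hi2ω := integrable_inv_pow ν hae hω 2
    have hi2ω₀ := integrable_inv_pow ν hae hω₀ 2
    have hi3 := integrable_inv_pow ν hae hω₀ 3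
    have key : 0 < ∫ x,
        (((x - ω) ^ 2)⁻¹ - ((x - ω₀) ^ 2)⁻¹ - 2 * (ω - ω₀) * ((x - ω₀) ^ 3)⁻¹) ∂ν := by
      have hiA : Integrable (fun x => ((x - ω) ^ 2)⁻¹ - ((x - ω₀) ^ 2)⁻¹) ν := hi2ω.sub hi2ω₀
      have hiB : Integrable (fun x => 2 * (ω - ω₀) * ((x - ω₀) ^ 3)⁻¹) ν := hi3.const_mul _
      have hiC : Integrable (fun x =>
          (((x - ω) ^ 2)⁻¹ - ((x - ω₀) ^ 2)⁻¹) - 2 * (ω - ω₀) * ((x - ω₀) ^ 3)⁻¹) ν :=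
        hiA.sub hiB
      apply integral_pos_of_ae_pos hν hiC
      filter_upwards [hae] with x hx
      have huv : 0 < (x - ω₀) * (x - ω) := by
        rcases hx with h | h
        · have := hω.1; have := hω₀.1
          exact mul_pos_of_neg_of_neg (by linarith) (by linarith)
        · have := hω.2; have := hω₀.2
          exact mul_pos (by linarith) (by linarith)
      have hvu : (x - ω : ℝ) ≠ x - ω₀ := fun h => hne (by linarith)
      have hkey := strict_convex_pt (u := x - ω₀) (v := x - ω) huv hvu
      rw [show ω - ω₀ = (x - ω₀) - (x - ω) from by ring]
      exact hkey
    have hiA : Integrable (fun x => ((x - ω) ^ 2)⁻¹ - ((x - ω₀) ^ 2)⁻¹) ν := hi2ω.sub hi2ω₀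
    have hiB : Integrable (fun x => 2 * (ω - ω₀) * ((x - ω₀) ^ 3)⁻¹) ν := hi3.const_mul _
    rw [integral_sub hiA hiB, integral_sub hi2ω hi2ω₀,
      integral_const_mul, hz0, mul_zero] at key
    linarith

end
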